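/- For a prime r ≥ 5, every non-trivial complex irreducible character χ of SL₂(F_r) satisfies χ(1) ≥ (r-1)/2; that is, the minimal dimension of a non-trivial irreducible complex representation of SL₂(F_r) is (r-1)/2. -/

import Mathlib

open Matrix Module Polynomial

namespace SL2Aux

variable {r : ℕ} [Fact r.Prime]

/-- Upper unipotent. -/
def U (t : ZMod r) : Matrix.SpecialLinearGroup (Fin 2) (ZMod r) :=
  ⟨!![1, t; 0, 1], by simp [Matrix.det_fin_two_of]⟩

/-- Lower unipotent. -/
def L (t : ZMod r) : Matrix.SpecialLinearGroup (Fin 2) (ZMod r) :=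
  ⟨!![1, 0; t, 1], by simp [Matrix.det_fin_two_of]⟩

lemma U_mul_U (s t : ZMod r) : U s * U t = U (s + t) := by
  apply Subtype.ext
  show (U s).1 * (U t).1 = _
  simp [U, Matrix.mul_fin_two, add_comm]

lemma U_pow (n : ℕ) : (U (r := r) 1) ^ n = U (n : ZMod r) := by
  induction n with
  | zero =>
    rw [pow_zero]
    apply Subtype.ext
    show _ = (U ((0:ℕ) : ZMod r)).1
    simp [U, Matrix.one_fin_two]
  | succ n ih =>
    rw [pow_succ, ih, U_mul_U]
    push_cast
    ring_nf


/-- Weyl element. -/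
def W : Matrix.SpecialLinearGroup (Fin 2) (ZMod r) :=
  ⟨!![0, -1; 1, 0], by simp [Matrix.det_fin_two_of]⟩

lemma W_mul_U (t : ZMod r) : W * U t = L (-t) * W := by
  apply Subtype.ext
  show (W (r := r)).1 * (U t).1 = (L (-t)).1 * (W (r := r)).1
  simp [U, L, W, Matrix.mul_fin_two]

lemma L_eq_conj (t : ZMod r) : L t = W * U (-t) * W⁻¹ := by
  rw [W_mul_U, neg_neg, mul_inv_cancel_right]

/-- Diagonal element. -/
def D (b : (ZMod r)ˣ) : Matrix.SpecialLinearGroup (Fin 2) (ZMod r) :=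
  ⟨!![(b : ZMod r), 0; 0, ((b⁻¹ : (ZMod r)ˣ) : ZMod r)], by
    rw [Matrix.det_fin_two_of, mul_zero, sub_zero, ← Units.val_mul,
      mul_inv_cancel, Units.val_one]⟩

lemma U_mul_D (b : (ZMod r)ˣ) :
    U 1 * D b = D b * U (((b⁻¹ * b⁻¹ : (ZMod r)ˣ) : ZMod r)) := by
  apply Subtype.ext
  show (U (r := r) 1).1 * (D b).1 = (D b).1 * (U _).1
  simp only [U, D, Matrix.mul_fin_two, one_mul, mul_one, zero_mul, mul_zero,
    add_zero, zero_add]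
  rw [← Units.val_mul, show b * (b⁻¹ * b⁻¹) = b⁻¹ by group]

lemma decomp (g : Matrix.SpecialLinearGroup (Fin 2) (ZMod r))
    (hc : (g : Matrix (Fin 2) (Fin 2) (ZMod r)) 1 0 ≠ 0) :
    g = U ((g.1 0 0 - 1) / g.1 1 0) * L (g.1 1 0) * U ((g.1 1 1 - 1) / g.1 1 0) := by
  have hdet : g.1 0 0 * g.1 1 1 - g.1 0 1 * g.1 1 0 = 1 := by
    have := g.2; rwa [Matrix.det_fin_two] at this
  apply Subtype.ext
  show g.1 = _
  rw [Matrix.SpecialLinearGroup.coe_mul, Matrix.SpecialLinearGroup.coe_mul]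
  set a := g.1 0 0
  set b := g.1 0 1
  set c := g.1 1 0
  set d := g.1 1 1
  have : g.1 = !![a, b; c, d] := by
    ext i j; fin_cases i <;> fin_cases j <;> rfl
  rw [this]
  simp only [U, L, Matrix.mul_fin_two]
  ext i j; fin_cases i <;> fin_cases j <;>
    simp only [Matrix.cons_val', Matrix.cons_val_zero, Matrix.cons_val_one,
      Matrix.head_cons, Matrix.head_fin_const, Matrix.empty_val',
      Matrix.cons_val_fin_one, Fin.zero_eta, Fin.mk_one, Matrix.of_apply] <;> field_simp
  · ring
  · linear_combination -hdet
  · ring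
  · ring

lemma gen {M : Type*} [Monoid M]
    (φ : Matrix.SpecialLinearGroup (Fin 2) (ZMod r) →* M)
    (hU : ∀ t, φ (U t) = 1) (hL : ∀ t, φ (L t) = 1)
    (g : Matrix.SpecialLinearGroup (Fin 2) (ZMod r)) : φ g = 1 := by
  have key : ∀ h : Matrix.SpecialLinearGroup (Fin 2) (ZMod r),
      (h : Matrix (Fin 2) (Fin 2) (ZMod r)) 1 0 ≠ 0 → φ h = 1 := by
    intro h hc
    rw [decomp h hc, _root_.map_mul, _root_.map_mul, hU, hL, hU, mul_one, mul_one]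
  by_cases hc : (g : Matrix (Fin 2) (Fin 2) (ZMod r)) 1 0 ≠ 0
  · exact key g hc
  · push_neg at hc
    have hdet : g.1 0 0 * g.1 1 1 - g.1 0 1 * g.1 1 0 = 1 := by
      have := g.2; rwa [Matrix.det_fin_two] at this
    have hd : g.1 1 1 ≠ 0 := by
      intro h0
      rw [hc, h0] at hdet; simp at hdet
    have hc' : ((g * L 1 : Matrix.SpecialLinearGroup (Fin 2) (ZMod r)) :
        Matrix (Fin 2) (Fin 2) (ZMod r)) 1 0 ≠ 0 := by
      rw [Matrix.SpecialLinearGroup.coe_mul]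
      simp [L, Matrix.mul_apply, Fin.sum_univ_two, hc, hd]
    have h1 : φ (g * L 1) = 1 := key _ hc'
    have h2 : g = (g * L 1) * L (-1) := by
      have : L (r := r) 1 * L (-1) = 1 := by
        apply Subtype.ext
        show (L (r := r) 1).1 * (L (-1)).1 = 1
        simp [L, Matrix.mul_fin_two, Matrix.one_fin_two]
      rw [mul_assoc, this, mul_one]
    rw [h2, _root_.map_mul, h1, hL, mul_one]

end SL2Aux

theorem stmt_5 (r : ℕ) (hr : r.Prime) (h5 : 5 ≤ r)
    {V : Type} [AddCommGroup V] [Module ℂ V] [FiniteDimensional ℂ V] [Nontrivial V]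
    (ρ : Representation ℂ (Matrix.SpecialLinearGroup (Fin 2) (ZMod r)) V)
    (hirr : ∀ p : Submodule ℂ V,
      (∀ g : Matrix.SpecialLinearGroup (Fin 2) (ZMod r), ∀ v ∈ p, ρ g v ∈ p) →
        p = ⊥ ∨ p = ⊤)
    (hnt : ∃ g : Matrix.SpecialLinearGroup (Fin 2) (ZMod r), ρ g ≠ 1) :
    (r - 1) / 2 ≤ Module.finrank ℂ V := by
  haveI := Fact.mk hr
  obtain ⟨a, ha⟩ := IsCyclic.exists_generator (α := (ZMod r)ˣ)
  set u : Matrix.SpecialLinearGroup (Fin 2) (ZMod r) := SL2Aux.U 1 with hu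
  set f : Module.End ℂ V := ρ u with hf
  -- `f ^ r = 1`
  have hU0 : SL2Aux.U (r := r) 0 = 1 := by
    apply Subtype.ext
    show _ = (1 : Matrix (Fin 2) (Fin 2) (ZMod r))
    simp [SL2Aux.U, Matrix.one_fin_two]
  have hfr : f ^ r = 1 := by
    rw [hf, ← _root_.map_pow, hu, SL2Aux.U_pow, ZMod.natCast_self, hU0,
      _root_.map_one]
  -- `f ≠ 1`
  have hfne : f ≠ 1 := by
    intro h1
    obtain ⟨g, hg⟩ := hnt
    apply hg
    have hUt : ∀ t, ρ (SL2Aux.U t) = 1 := by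
      intro t
      have h2 : SL2Aux.U (r := r) t = u ^ t.val := by
        rw [hu, SL2Aux.U_pow]
        congr 1
        simp [ZMod.natCast_val, ZMod.cast_id]
      rw [h2, _root_.map_pow, ← hf, h1, one_pow]
    have hLt : ∀ t, ρ (SL2Aux.L t) = 1 := by
      intro t
      rw [SL2Aux.L_eq_conj, _root_.map_mul, _root_.map_mul, hUt, mul_one,
        ← _root_.map_mul, mul_inv_cancel, _root_.map_one]
    exact SL2Aux.gen ρ hUt hLt g
  -- there is an eigenvalue `ζ ≠ 1`
  have hint : IsIntegral ℂ f := Algebra.IsIntegral.isIntegral f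
  have hmonic : (minpoly ℂ f).Monic := minpoly.monic hint
  have hdvd : minpoly ℂ f ∣ X ^ r - C 1 := by
    apply minpoly.dvd
    rw [map_sub, aeval_X_pow, aeval_C]
    simp [hfr]
  have hsep : (minpoly ℂ f).Separable :=
    Polynomial.Separable.of_dvd
      (Polynomial.separable_X_pow_sub_C 1 (Nat.cast_ne_zero.2 hr.ne_zero)
        one_ne_zero) hdvd
  have hex : ∃ ζ : ℂ, ζ ≠ 1 ∧ f.HasEigenvalue ζ := by
    by_contra hno
    push_neg at hno
    have hall : ∀ z : ℂ, (minpoly ℂ f).IsRoot z → z = 1 := by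
      intro z hz
      by_contra hz1
      exact hno z hz1 (Module.End.hasEigenvalue_iff_isRoot.2 hz)
    have hdegpos : 0 < (minpoly ℂ f).natDegree := minpoly.natDegree_pos hint
    have hsplits : Polynomial.Splits (minpoly ℂ f) :=
      IsAlgClosed.splits _
    have hcard : Multiset.card (minpoly ℂ f).roots = (minpoly ℂ f).natDegree :=
      Polynomial.splits_iff_card_roots.1 hsplits
    have hnodup := Polynomial.nodup_roots (p := minpoly ℂ f) hsep
    have hsub : (minpoly ℂ f).roots ⊆ {1} := by
      intro z hz
      have := hall z (Polynomial.isRoot_of_mem_roots hz)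
      simp [this]
    have hcard1 : Multiset.card (minpoly ℂ f).roots ≤ 1 := by
      have := Multiset.card_le_card ((Multiset.le_iff_subset hnodup).2 hsub)
      simpa using this
    have hdeg1 : (minpoly ℂ f).natDegree = 1 :=
      le_antisymm (hcard ▸ hcard1) hdegpos
    have heq : minpoly ℂ f = X + C ((minpoly ℂ f).coeff 0) :=
      hmonic.eq_X_add_C hdeg1
    have hroot1 : (minpoly ℂ f).IsRoot 1 := by
      obtain ⟨z, hz⟩ := IsAlgClosed.exists_root (minpoly ℂ f)
        (by rw [Polynomial.degree_eq_natDegree (minpoly.ne_zero hint), hdeg1]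
            simp)
      rwa [hall z hz] at hz
    have hc : (minpoly ℂ f).coeff 0 = -1 := by
      have h3 := hroot1
      rw [heq] at h3
      simp [Polynomial.IsRoot] at h3
      linear_combination h3
    have h4 : Polynomial.aeval f (minpoly ℂ f) = 0 := minpoly.aeval ℂ f
    rw [heq, hc] at h4
    simp only [_root_.map_add, Polynomial.aeval_X, Polynomial.aeval_C, _root_.map_neg,
      _root_.map_one] at h4
    exact hfne (eq_of_sub_eq_zero (by simpa [sub_eq_add_neg] using h4))
  obtain ⟨ζ, hζ1, hζ⟩ := hex
  obtain ⟨v, hv⟩ := hζ.exists_hasEigenvector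
  -- ζ^r = 1 and ζ is a unit of order r
  have hζr : ζ ^ r = 1 := by
    have h5 : (f ^ r) v = ζ ^ r • v := hv.pow_apply r
    rw [hfr] at h5
    have h6 : (ζ ^ r - 1) • v = 0 := by
      rw [sub_smul, one_smul, ← h5]; simp
    rcases smul_eq_zero.1 h6 with h7 | h7
    · exact sub_eq_zero.1 h7
    · exact absurd h7 hv.2
  have hζ0 : ζ ≠ 0 := by
    intro h
    rw [h, zero_pow hr.ne_zero] at hζr
    exact zero_ne_one hζr
  set zu : ℂˣ := Units.mk0 ζ hζ0 with hzu
  have hzur : zu ^ r = 1 := by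
    ext
    rw [Units.val_pow_eq_pow_val]
    simpa [hzu] using hζr
  have horder : orderOf zu = r := by
    have hdvd' : orderOf zu ∣ r := orderOf_dvd_of_pow_eq_one hzur
    rcases (Nat.Prime.eq_one_or_self_of_dvd hr _ hdvd') with h | h
    · exfalso
      have : zu = 1 := orderOf_eq_one_iff.1 h
      apply hζ1
      have := congrArg Units.val this
      simpa [hzu] using this
    · exact h
  -- the exponent N
  set N : ℕ := ((a * a : (ZMod r)ˣ) : ZMod r).val with hN
  have hNcast : ((N : ℕ) : ZMod r) = ((a * a : (ZMod r)ˣ) : ZMod r) := by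
    rw [hN, ZMod.natCast_val, ZMod.cast_id]
  -- eigenvalue step via conjugation by the diagonal element
  have hstep : ∀ ξ : ℂ, f.HasEigenvalue ξ → f.HasEigenvalue (ξ ^ N) := by
    intro ξ hξ
    obtain ⟨w, hw⟩ := hξ.exists_hasEigenvector
    set e := SL2Aux.D (r := r) a⁻¹ with he
    have hcomm : u * e = e * u ^ N := by
      rw [hu, he, SL2Aux.U_mul_D, inv_inv, SL2Aux.U_pow, hNcast]
    have hcalc : f (ρ e w) = ξ ^ N • ρ e w := by
      have h8 : (ρ u * ρ e) w = (ρ e * ρ u ^ N) w := by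
        rw [← _root_.map_mul, ← _root_.map_pow, ← _root_.map_mul, hcomm]
      have h9 : (f ^ N) w = ξ ^ N • w := hw.pow_apply N
      calc f (ρ e w) = (ρ u * ρ e) w := rfl
        _ = (ρ e * ρ u ^ N) w := h8
        _ = ρ e ((f ^ N) w) := rfl
        _ = ρ e (ξ ^ N • w) := by rw [h9]
        _ = ξ ^ N • ρ e w := (ρ e).map_smul _ _
    have hne : ρ e w ≠ 0 := by
      intro h0
      apply hw.2
      have h10 : ρ e⁻¹ (ρ e w) = w := by
        rw [← Module.End.mul_apply, ← _root_.map_mul, inv_mul_cancel,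
          _root_.map_one, Module.End.one_apply]
      rw [h0, map_zero] at h10
      exact h10.symm
    exact Module.End.hasEigenvalue_of_hasEigenvector
      ⟨Module.End.mem_eigenspace_iff.2 hcalc, hne⟩
  have hiter : ∀ k : ℕ, f.HasEigenvalue (ζ ^ (N ^ k)) := by
    intro k
    induction k with
    | zero => simpa using hζ
    | succ k ih =>
      have := hstep _ ih
      rwa [← pow_mul, ← pow_succ] at this
  -- order computations
  have horda : orderOf a = r - 1 := by
    rw [orderOf_eq_card_of_forall_mem_zpowers ha, Nat.card_eq_fintype_card,
      ZMod.card_units_eq_totient, Nat.totient_prime hr]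
  have h2dvd : 2 ∣ r - 1 :=
    (Nat.Odd.sub_odd (hr.odd_of_ne_two (by omega)) odd_one).two_dvd
  have horda2 : orderOf (a * a) = (r - 1) / 2 := by
    rw [← sq, orderOf_pow, horda, Nat.gcd_comm, Nat.gcd_eq_left h2dvd]
  -- the family of distinct eigenvalues
  set μ : Fin ((r - 1) / 2) → ℂ := fun k => ζ ^ (N ^ (k : ℕ)) with hμ
  have hμinj : Function.Injective μ := by
    intro k l hkl
    have h11 : zu ^ (N ^ (k : ℕ)) = zu ^ (N ^ (l : ℕ)) := by
      ext
      rw [Units.val_pow_eq_pow_val, Units.val_pow_eq_pow_val]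
      simpa [hzu] using hkl
    have h12 : N ^ (k : ℕ) ≡ N ^ (l : ℕ) [MOD r] := by
      have := pow_eq_pow_iff_modEq.1 h11
      rwa [horder] at this
    have h13 : ((N : ZMod r)) ^ (k : ℕ) = ((N : ZMod r)) ^ (l : ℕ) := by
      have := (ZMod.natCast_eq_natCast_iff _ _ _).2 h12
      push_cast at this
      exact this
    have h14 : (a * a) ^ (k : ℕ) = (a * a) ^ (l : ℕ) := by
      apply Units.ext
      rw [Units.val_pow_eq_pow_val, Units.val_pow_eq_pow_val, ← hNcast]
      exact h13
    have h15 : (k : ℕ) ≡ (l : ℕ) [MOD (r - 1) / 2] := by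
      have := pow_eq_pow_iff_modEq.1 h14
      rwa [horda2] at this
    have h16 : (k : ℕ) % ((r - 1) / 2) = (l : ℕ) % ((r - 1) / 2) := h15
    rw [Nat.mod_eq_of_lt k.2, Nat.mod_eq_of_lt l.2] at h16
    exact Fin.ext h16
  -- conclude via linear independence of eigenvectors
  have hvec : ∀ k : Fin ((r - 1) / 2), ∃ w, f.HasEigenvector (μ k) w :=
    fun k => (hiter (k : ℕ)).exists_hasEigenvector
  choose w hw using hvec
  have hli : LinearIndependent ℂ w :=
    Module.End.eigenvectors_linearIndependent' f μ hμinj w hw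
  have := hli.fintype_card_le_finrank
  simpa using this
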